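/- (Inequality (32): the surrogate variance dominates the true variance.) Let P, σ, A, B > 0 and let H, h be reals with 0 < H and H² ≤ h². Define sequences a, b : ℕ → ℝ by a₁ = σ²/(12·P·H²), b₁ = σ²/(12·P·h²), and for l ≥ 1, a_{l+1} = ( 1/a_l + H²·(P/B)·(A/a_l)/σ² )^{−1} and b_{l+1} = ( 1/b_l + h²·(P/B)·(A/a_l)/σ² )^{−1}. Then for every j ≥ 1, 0 < b_j ≤ a_j. -/
import Mathlib


/-- Inequality (32): the surrogate variance dominates the true variance.
Let `P, σ, A, B > 0` and `0 < H`, `H² ≤ h²`.  With `a 1 = σ²/(12·P·H²)`,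
`b 1 = σ²/(12·P·h²)`, and, for `l ≥ 1`,
`a (l+1) = (1/a l + H²·(P/B)·(A/a l)/σ²)⁻¹` and
`b (l+1) = (1/b l + h²·(P/B)·(A/a l)/σ²)⁻¹`,
we have `0 < b j ≤ a j` for every `j ≥ 1`. -/
theorem surrogate_variance_dominates (P σ A B H h : ℝ)
    (hP : 0 < P) (hσ : 0 < σ) (hA : 0 < A) (hB : 0 < B)
    (hH : 0 < H) (hHh : H ^ 2 ≤ h ^ 2)
    (a b : ℕ → ℝ)
    (ha1 : a 1 = σ ^ 2 / (12 * P * H ^ 2))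
    (hb1 : b 1 = σ ^ 2 / (12 * P * h ^ 2))
    (harec : ∀ l : ℕ, 1 ≤ l →
      a (l + 1) = (1 / a l + H ^ 2 * (P / B) * (A / a l) / σ ^ 2)⁻¹)
    (hbrec : ∀ l : ℕ, 1 ≤ l →
      b (l + 1) = (1 / b l + h ^ 2 * (P / B) * (A / a l) / σ ^ 2)⁻¹) :
    ∀ j : ℕ, 1 ≤ j → 0 < b j ∧ b j ≤ a j := by
  have hH2 : (0:ℝ) < H ^ 2 := by positivity
  have hh2 : (0:ℝ) < h ^ 2 := lt_of_lt_of_le hH2 hHh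
  have key : ∀ j : ℕ, 1 ≤ j → 0 < b j ∧ 0 < a j ∧ b j ≤ a j := by
    intro j hj
    induction j, hj using Nat.le_induction with
    | base =>
      rw [ha1, hb1]
      refine ⟨by positivity, by positivity, ?_⟩
      apply div_le_div_of_nonneg_left (by positivity) (by positivity)
      exact mul_le_mul_of_nonneg_left hHh (by positivity)
    | succ l hl ih =>
      obtain ⟨hb, ha, hba⟩ := ih
      rw [harec l hl, hbrec l hl]
      have hc : 0 < (P / B) * (A / a l) / σ ^ 2 := by positivity
      have h1 : (0:ℝ) < 1 / b l + h ^ 2 * (P / B) * (A / a l) / σ ^ 2 := by positivity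
      have h2 : 1 / a l + H ^ 2 * (P / B) * (A / a l) / σ ^ 2
          ≤ 1 / b l + h ^ 2 * (P / B) * (A / a l) / σ ^ 2 := by
        gcongr
      have h3 : (0:ℝ) < 1 / a l + H ^ 2 * (P / B) * (A / a l) / σ ^ 2 := by positivity
      exact ⟨inv_pos.2 h1, inv_pos.2 h3, inv_anti₀ h3 h2⟩
  exact fun j hj => ⟨(key j hj).1, (key j hj).2.2⟩
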